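/- Let f : G → G' be a homomorphism of finite groups and → a G-transfer system. Then f_L(→), the transfer system generated by the image pairs, equals the reflexive-transitive closure of the relation ⋃_{K → H} { (g f(K) g⁻¹, g f(H) g⁻¹) : g ∈ G' } on Sub(G'). -/

import Mathlib

/-- Conjugation of a subgroup: `gKg⁻¹`. -/
def conjSub {G : Type*} [Group G] (g : G) (K : Subgroup G) : Subgroup G :=
  Subgroup.map (MulAut.conj g).toMonoidHom K

/-- A `G`-transfer system: a partial order on subgroups refining inclusion,
closed under conjugation and restriction. -/
def IsTransferSystem {G : Type*} [Group G] (R : Subgroup G → Subgroup G → Prop) : Prop :=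
  (∀ H, R H H) ∧
  (∀ ⦃K H⦄, R K H → R H K → K = H) ∧
  (∀ ⦃K J H⦄, R K J → R J H → R K H) ∧
  (∀ ⦃K H⦄, R K H → K ≤ H) ∧
  (∀ ⦃K H⦄ (g : G), R K H → R (conjSub g K) (conjSub g H)) ∧
  (∀ ⦃K H⦄, R K H → ∀ ⦃L⦄, L ≤ H → R (L ⊓ K) L)

/-- `TL` is the transfer system generated by the relation `R`:
the least transfer system containing `R`. -/
def IsGenBy {G : Type*} [Group G] (TL R : Subgroup G → Subgroup G → Prop) : Prop :=
  IsTransferSystem TL ∧ (∀ K H, R K H → TL K H) ∧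
    ∀ T, IsTransferSystem T → (∀ K H, R K H → T K H) → ∀ K H, TL K H → T K H

section AuxLemmas

variable {G G' : Type*} [Group G] [Group G']

lemma conjSub_one (K : Subgroup G) : conjSub (1 : G) K = K := by
  simp [conjSub]
  exact Subgroup.map_id K

lemma conjSub_mul (g h : G) (K : Subgroup G) :
    conjSub (g * h) K = conjSub g (conjSub h K) := by
  unfold conjSub
  rw [Subgroup.map_map]
  congr 1
  ext x; simp [mul_assoc]

lemma conjSub_inv_conj (g : G) (K : Subgroup G) : conjSub g⁻¹ (conjSub g K) = K := by
  rw [← conjSub_mul, inv_mul_cancel, conjSub_one]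

lemma conjSub_conj_inv (g : G) (K : Subgroup G) : conjSub g (conjSub g⁻¹ K) = K := by
  rw [← conjSub_mul, mul_inv_cancel, conjSub_one]

lemma conjSub_mono (g : G) {A B : Subgroup G} (h : A ≤ B) : conjSub g A ≤ conjSub g B :=
  Subgroup.map_mono h

lemma conjSub_inf (g : G) (A B : Subgroup G) :
    conjSub g (A ⊓ B) = conjSub g A ⊓ conjSub g B :=
  Subgroup.map_inf A B _ (MulAut.conj g).injective

lemma map_comap_inf (f : G →* G') (L : Subgroup G') (K : Subgroup G) :
    (L.comap f ⊓ K).map f = L ⊓ K.map f := by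
  ext x
  simp only [Subgroup.mem_map, Subgroup.mem_inf, Subgroup.mem_comap]
  aesop

end AuxLemmas

theorem stmt17 {G G' : Type*} [Group G] [Group G'] [Finite G] [Finite G']
    (f : G →* G')
    (T : Subgroup G → Subgroup G → Prop) (hT : IsTransferSystem T)
    (TL : Subgroup G' → Subgroup G' → Prop)
    (hTL : IsGenBy TL (fun A B => ∃ K H : Subgroup G, T K H ∧ A = K.map f ∧ B = H.map f)) :
    ∀ A B, TL A B ↔ Relation.ReflTransGen
      (fun A B => ∃ (K H : Subgroup G) (g : G'), T K H ∧
        A = conjSub g (K.map f) ∧ B = conjSub g (H.map f)) A B := by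
  obtain ⟨hTrefl, hTanti, hTtrans, hTle, hTconj, hTres⟩ := hT
  obtain ⟨hTLts, hTLcont, hTLmin⟩ := hTL
  set r : Subgroup G' → Subgroup G' → Prop := fun A B => ∃ (K H : Subgroup G) (g : G'),
      T K H ∧ A = conjSub g (K.map f) ∧ B = conjSub g (H.map f) with hrdef
  -- single steps refine inclusion
  have step_le : ∀ ⦃A B⦄, r A B → A ≤ B := by
    rintro A B ⟨K, H, g, hKH, rfl, rfl⟩
    exact conjSub_mono g (Subgroup.map_mono (hTle hKH))
  have S_le : ∀ ⦃A B⦄, Relation.ReflTransGen r A B → A ≤ B := by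
    intro A B h
    induction h with
    | refl => exact le_refl _
    | tail _ hstep ih => exact le_trans ih (step_le hstep)
  -- single steps are closed under conjugation
  have step_conj : ∀ ⦃A B⦄ (g : G'), r A B → r (conjSub g A) (conjSub g B) := by
    rintro A B g ⟨K, H, g₀, hKH, rfl, rfl⟩
    exact ⟨K, H, g * g₀, hKH, (conjSub_mul g g₀ _).symm, (conjSub_mul g g₀ _).symm⟩
  -- single steps are closed under restriction, landing in single steps
  have step_res : ∀ ⦃A B⦄, r A B → ∀ ⦃L⦄, L ≤ B → r (L ⊓ A) L := by
    rintro A B ⟨K, H, g, hKH, rfl, rfl⟩ L hL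
    set L' : Subgroup G' := conjSub g⁻¹ L with hL'def
    have hL' : L' ≤ H.map f := by
      have := conjSub_mono g⁻¹ hL
      rwa [conjSub_inv_conj] at this
    set M : Subgroup G := L'.comap f ⊓ H with hMdef
    have hMH : M ≤ H := inf_le_right
    have hTM : T (M ⊓ K) M := hTres hKH hMH
    refine ⟨M ⊓ K, M, g, hTM, ?_, ?_⟩
    · have hMK : M ⊓ K = L'.comap f ⊓ K := by
        rw [hMdef, inf_assoc, inf_eq_right.mpr (hTle hKH)]
      rw [hMK, map_comap_inf, conjSub_inf, hL'def, conjSub_conj_inv]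
    · rw [hMdef, map_comap_inf, inf_eq_left.mpr hL', hL'def, conjSub_conj_inv]
  intro A B
  constructor
  · -- TL ⊆ closure
    refine hTLmin _ ⟨?_, ?_, ?_, ?_, ?_, ?_⟩ ?_ A B
    · intro H; exact Relation.ReflTransGen.refl
    · intro K H h h'; exact le_antisymm (S_le h) (S_le h')
    · intro K J H h h'; exact h.trans h'
    · exact S_le
    · intro K H g h
      exact Relation.ReflTransGen.lift (p := r) (conjSub g) (fun a b hab => step_conj g hab) _ _ h
    · -- restriction for the closure
      intro K H h
      induction h with
      | refl =>
        intro L hL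
        rw [inf_eq_left.mpr hL]
      | @tail J H hKJ hJH ih =>
        intro L hL
        have h1 : Relation.ReflTransGen r (L ⊓ J) L := Relation.ReflTransGen.single (step_res hJH hL)
        have hLJ : L ⊓ J ≤ J := inf_le_right
        have h2 : Relation.ReflTransGen r ((L ⊓ J) ⊓ K) (L ⊓ J) := ih hLJ
        have hKJ' : K ≤ J := S_le hKJ
        have : (L ⊓ J) ⊓ K = L ⊓ K := by
          rw [inf_assoc, inf_eq_right.mpr hKJ']
        rw [this] at h2
        exact h2.trans h1
    · -- closure contains the image pairs
      rintro A B ⟨K, H, hKH, rfl, rfl⟩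
      refine Relation.ReflTransGen.single ⟨K, H, 1, hKH, ?_, ?_⟩ <;> rw [conjSub_one]
  · -- closure ⊆ TL
    intro h
    induction h with
    | refl => exact hTLts.1 A
    | @tail J B' hAJ hstep ih =>
      obtain ⟨K, H, g, hKH, rfl, rfl⟩ := hstep
      have h1 : TL (K.map f) (H.map f) := hTLcont _ _ ⟨K, H, hKH, rfl, rfl⟩
      have h2 : TL (conjSub g (K.map f)) (conjSub g (H.map f)) := hTLts.2.2.2.2.1 g h1
      exact hTLts.2.2.1 ih h2
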